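/- The number of maximal triangle-free graphs on the vertex set {1,...,n} is at least 2^{n^2/8 + o(n^2)}. Precisely: for every ε > 0 there exists N such that for all n ≥ N, the number of simple graphs H on vertex set Fin n that are maximal triangle-free is at least 2^{(1/8 - ε) n^2}. -/

import Mathlib

/-- `H` is maximal triangle-free: `H` contains no triangle, and adding any non-edge of `H`
creates a triangle. -/
def MaximalTriangleFree {n : ℕ} (H : SimpleGraph (Fin n)) : Prop :=
  H.CliqueFree 3 ∧ ∀ u v : Fin n, u ≠ v → ¬ H.Adj u v →
    ¬ (H ⊔ SimpleGraph.fromEdgeSet {s(u, v)}).CliqueFree 3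

namespace MTFAux

/-- The vertex type: an apex `z`, matched pairs `Fin m × Bool`, gadget vertices
`Fin (p+1) × Bool` and free vertices `Fin k`. -/
abbrev V (m p k : ℕ) : Type := (Unit ⊕ (Fin m × Bool)) ⊕ ((Fin (p+1) × Bool) ⊕ Fin k)

variable {m p k : ℕ}

/-- For each pair `i` and each "Y" vertex, which side of the pair it attaches to. -/
def fc (g : Fin m → Fin k → Bool) : Fin m → ((Fin (p+1) × Bool) ⊕ Fin k) → Bool
  | i, .inl jc => xor jc.2 (Nat.testBit i.val jc.1.val)
  | i, .inr y => g i y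

def rel (g : Fin m → Fin k → Bool) : V m p k → V m p k → Prop
  | .inl (.inl _), .inl (.inl _) => False
  | .inl (.inl _), .inl (.inr _) => False
  | .inl (.inl _), .inr _ => True
  | .inl (.inr _), .inl (.inl _) => False
  | .inl (.inr xb), .inl (.inr xb') => xb.1 = xb'.1 ∧ xb.2 ≠ xb'.2
  | .inl (.inr xb), .inr y => fc g xb.1 y = xb.2
  | .inr _, _ => False

def G (p : ℕ) (g : Fin m → Fin k → Bool) : SimpleGraph (V m p k) := SimpleGraph.fromRel (rel g)

lemma adj_iff (g : Fin m → Fin k → Bool) (u v : V m p k) :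
    (G p g).Adj u v ↔ u ≠ v ∧ (rel g u v ∨ rel g v u) := SimpleGraph.fromRel_adj _ u v

lemma cliqueFree (g : Fin m → Fin k → Bool) : (G p g).CliqueFree 3 := by
  intro s hs
  rw [SimpleGraph.is3Clique_iff] at hs
  obtain ⟨a, b, c, hab, hac, hbc, -⟩ := hs
  rcases a with (⟨⟩|⟨ia,ba⟩)|ya <;> rcases b with (⟨⟩|⟨ib,bb⟩)|yb <;>
    rcases c with (⟨⟩|⟨ic,bc⟩)|yc <;>
    simp only [adj_iff, rel, ne_eq, or_false, false_or, or_self, and_false, and_true,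
      not_false_eq_true, true_and] at hab hac hbc
  all_goals obtain ⟨-, hab⟩ := hab
  all_goals obtain ⟨-, hac⟩ := hac
  all_goals obtain ⟨-, hbc⟩ := hbc
  all_goals (try (rcases hab with ⟨rfl, hab⟩ | ⟨rfl, hab⟩))
  all_goals (try (rcases hac with ⟨rfl, hac⟩ | ⟨rfl, hac⟩))
  all_goals (try (rcases hbc with ⟨rfl, hbc⟩ | ⟨rfl, hbc⟩))
  all_goals try simp_all
  all_goals (cases ba <;> cases bb <;> cases bc <;> simp_all)


lemma maximality (hmp : m ≤ 2 ^ p) (g : Fin m → Fin k → Bool) :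
    ∀ u v : V m p k, u ≠ v → ¬ (G p g).Adj u v →
      ∃ w, (G p g).Adj u w ∧ (G p g).Adj v w := by
  have htop : ∀ i : Fin m, Nat.testBit i.val p = false := fun i =>
    Nat.testBit_lt_two_pow (lt_of_lt_of_le i.2 hmp)
  intro u v hne hna
  rcases u with (⟨⟩|⟨i,b⟩)|y <;> rcases v with (⟨⟩|⟨i',b'⟩)|y'
  · exact absurd rfl hne
  · -- z, X
    refine ⟨.inr (.inl (Fin.last p, b')), ?_, ?_⟩ <;>
      simp [adj_iff, rel, fc, Fin.last, htop i']
  ·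
    exact absurd (by simp [adj_iff, rel]) hna
  · -- X, z
    refine ⟨.inr (.inl (Fin.last p, b)), ?_, ?_⟩ <;>
      simp [adj_iff, rel, fc, Fin.last, htop i]
  · -- X, X
    have hii : i ≠ i' := by
      rintro rfl
      rcases eq_or_ne b b' with rfl | hbb
      · exact hne rfl
      · exact hna (by simp [adj_iff, rel, hbb])
    by_cases hbb : b = b'
    · subst hbb
      refine ⟨.inr (.inl (Fin.last p, b)), ?_, ?_⟩ <;>
        simp [adj_iff, rel, fc, Fin.last, htop i, htop i']
    · obtain ⟨j, hj⟩ := Nat.exists_testBit_ne_of_ne (fun h => hii (Fin.val_injective h))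
      have hjp : j < p + 1 := by
        by_contra hle
        have h1 : Nat.testBit i.val j = false :=
          Nat.testBit_lt_two_pow (lt_of_lt_of_le (lt_of_lt_of_le i.2 hmp)
            (Nat.pow_le_pow_right (by norm_num) (by omega)))
        have h2 : Nat.testBit i'.val j = false :=
          Nat.testBit_lt_two_pow (lt_of_lt_of_le (lt_of_lt_of_le i'.2 hmp)
            (Nat.pow_le_pow_right (by norm_num) (by omega)))
        rw [h1, h2] at hj; exact hj rfl
      refine ⟨.inr (.inl (⟨j, hjp⟩, xor b (Nat.testBit i.val j))), ?_, ?_⟩ <;>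
        [skip; skip] <;>
      · simp only [adj_iff, rel, fc]
        constructor
        · simp
        · left
          revert hj hbb
          cases Nat.testBit i.val j <;> cases Nat.testBit i'.val j <;>
            cases b <;> cases b' <;> simp
  · -- X, Y
    have hfc : fc g i y' = !b := by
      have : fc g i y' ≠ b := fun h => hna (by simp [adj_iff, rel, h])
      revert this; cases fc g i y' <;> cases b <;> simp
    refine ⟨.inl (.inr (i, !b)), ?_, ?_⟩ <;>
      simp [adj_iff, rel, hfc]
  · -- Y, z : adjacent
    exact absurd (by simp [adj_iff, rel]) hna
  · -- Y, X
    have hfc : fc g i' y = !b' := by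
      have : fc g i' y ≠ b' := fun h => hna (by simp [adj_iff, rel, h])
      revert this; cases fc g i' y <;> cases b' <;> simp
    refine ⟨.inl (.inr (i', !b')), ?_, ?_⟩ <;>
      simp [adj_iff, rel, hfc]
  · -- Y, Y
    exact ⟨.inl (.inl ()), by simp [adj_iff, rel], by simp [adj_iff, rel]⟩


lemma G_injective : Function.Injective (G (m := m) (k := k) p) := by
  intro g g' h
  funext i y
  by_contra hne
  have h1 : (G p g).Adj (.inl (.inr (i, g i y))) (.inr (.inr y)) := by
    simp [adj_iff, rel, fc]
  rw [h] at h1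
  rw [adj_iff] at h1
  rcases h1.2 with h2 | h2
  · have h3 : g' i y = g i y := by simpa [rel, fc] using h2
    exact hne h3.symm
  · simp [rel] at h2

open SimpleGraph in
lemma card_bound (m p k n : ℕ) (hmp : m ≤ 2 ^ p)
    (hn : 1 + 2 * m + (2 * (p + 1) + k) = n) :
    2 ^ (m * k) ≤ Nat.card {H : SimpleGraph (Fin n) // MaximalTriangleFree H} := by
  have hcard : Fintype.card (V m p k) = n := by
    simp [V, Fintype.card_sum, Fintype.card_prod]
    omega
  let e : V m p k ≃ Fin n := Fintype.equivFinOfCardEq hcard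
  have hF : ∀ g : Fin m → Fin k → Bool,
      MaximalTriangleFree ((G p g).map e.toEmbedding) := by
    intro g
    constructor
    · exact (SimpleGraph.cliqueFree_map_iff).mpr (cliqueFree g)
    · intro u v huv hnadj hcf
      have hab : e.symm u ≠ e.symm v := fun h => huv (by simpa using congrArg e h)
      have hnadj' : ¬ (G p g).Adj (e.symm u) (e.symm v) := fun h => hnadj (by
        have := SimpleGraph.map_adj_apply (G := G p g) (f := e.toEmbedding)
          (a := e.symm u) (b := e.symm v)
        simpa using this.mpr h)
      obtain ⟨w, hw1, hw2⟩ := maximality hmp g _ _ hab hnadj'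
      apply hcf {u, v, e w}
      rw [SimpleGraph.is3Clique_triple_iff]
      refine ⟨?_, ?_, ?_⟩
      · exact Or.inr (by rw [SimpleGraph.fromEdgeSet_adj]; exact ⟨rfl, huv⟩)
      · refine Or.inl ?_
        have := (SimpleGraph.map_adj_apply (G := G p g) (f := e.toEmbedding)
          (a := e.symm u) (b := w)).mpr hw1
        simpa using this
      · refine Or.inl ?_
        have := (SimpleGraph.map_adj_apply (G := G p g) (f := e.toEmbedding)
          (a := e.symm v) (b := w)).mpr hw2
        simpa using this
  let F : (Fin m → Fin k → Bool) → {H : SimpleGraph (Fin n) // MaximalTriangleFree H} :=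
    fun g => ⟨(G p g).map e.toEmbedding, hF g⟩
  have hFinj : Function.Injective F := by
    intro g g' h
    apply G_injective
    have hmap : (G p g).map e.toEmbedding = (G p g').map e.toEmbedding :=
      congrArg Subtype.val h
    ext a b
    constructor <;> intro hadj
    · have := (SimpleGraph.map_adj_apply (f := e.toEmbedding)).mpr hadj
      rw [hmap] at this
      exact (SimpleGraph.map_adj_apply (f := e.toEmbedding)).mp this
    · have := (SimpleGraph.map_adj_apply (f := e.toEmbedding)).mpr hadj
      rw [← hmap] at this
      exact (SimpleGraph.map_adj_apply (f := e.toEmbedding)).mp this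
  calc 2 ^ (m * k) = Nat.card (Fin m → Fin k → Bool) := by
        simp [Nat.card_eq_fintype_card, Fintype.card_fun, pow_mul, mul_comm, pow_right_comm]
    _ ≤ Nat.card {H : SimpleGraph (Fin n) // MaximalTriangleFree H} :=
        Nat.card_le_card_of_injective F hFinj


lemma two_mul_add_one_le (s : ℕ) (h : 3 ≤ s) : 2 * s + 1 ≤ 2 ^ s := by
  induction s with
  | zero => omega
  | succ n ih =>
    rcases Nat.lt_or_ge n 3 with h3 | h3
    · interval_cases n <;> first | omega | norm_num
    · have := ih h3
      rw [pow_succ]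
      omega

lemma sq_le_two_pow (s : ℕ) (h : 4 ≤ s) : s * s ≤ 2 ^ s := by
  induction s with
  | zero => omega
  | succ n ih =>
    rcases Nat.lt_or_ge n 4 with h4 | h4
    · interval_cases n <;> first | omega | norm_num
    · have h1 := ih h4
      have h2 := two_mul_add_one_le n (by omega)
      rw [pow_succ]
      nlinarith [h1, h2]

end MTFAux

/-- The number of maximal triangle-free graphs on vertex set `Fin n` is at least
`2 ^ (n^2/8 - o(n^2))`. -/
theorem maximal_triangle_free_lower_bound :
    ∀ ε : ℝ, 0 < ε → ∃ N : ℕ, ∀ n : ℕ, N ≤ n →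
      2 ^ ((1 / 8 - ε) * (n : ℝ) ^ 2)
        ≤ (Nat.card {H : SimpleGraph (Fin n) // MaximalTriangleFree H} : ℝ) := by
  intro ε hε
  set A : ℕ := ⌈(8 : ℝ) / ε⌉₊ + 9 with hA
  refine ⟨A * A + 81, fun n hn => ?_⟩
  set q := Nat.sqrt n with hqdef
  set m := n / 4 with hmdef
  have hAq : A ≤ q := Nat.le_sqrt.mpr (by omega)
  have hq9 : 9 ≤ q := le_trans (by omega) hAq
  have hqq : q * q ≤ n := Nat.sqrt_le n
  have h9q : 9 * q ≤ n := le_trans (Nat.mul_le_mul_right q hq9) hqq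
  have h81 : 81 ≤ n := by omega
  set k := n - 1 - 2 * m - 2 * (q + 2) with hkdef
  have hsum : 1 + 2 * m + (2 * ((q + 1) + 1) + k) = n := by omega
  have hmp : m ≤ 2 ^ (q + 1) := by
    have h1 : n < (q + 1) * (q + 1) := Nat.lt_succ_sqrt n
    have h2 : (q + 1) * (q + 1) ≤ 2 ^ (q + 1) := MTFAux.sq_le_two_pow _ (by omega)
    omega
  have hcount := MTFAux.card_bound m (q + 1) k n hmp hsum
  -- real arithmetic
  have h8A : (8 : ℝ) ≤ ε * A := by
    have h1 : (8 : ℝ) / ε ≤ ⌈(8 : ℝ) / ε⌉₊ := Nat.le_ceil _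
    have h2 : ((⌈(8 : ℝ) / ε⌉₊ : ℝ) + 9) = (A : ℝ) := by rw [hA]; push_cast; ring
    rw [← h2]
    rw [div_le_iff₀ hε] at h1
    nlinarith
  have hAqR : (A : ℝ) ≤ (q : ℝ) := Nat.cast_le.mpr hAq
  have hqqR : (q : ℝ) * q ≤ (n : ℝ) := by exact_mod_cast hqq
  have hq9R : (9 : ℝ) ≤ q := by exact_mod_cast hq9
  have hq0 : (0 : ℝ) ≤ (q : ℝ) := Nat.cast_nonneg q
  have hn0 : (0 : ℝ) ≤ (n : ℝ) := Nat.cast_nonneg n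
  have hm0 : (0 : ℝ) ≤ (m : ℝ) := Nat.cast_nonneg m
  have hm1 : 4 * (m : ℝ) ≤ (n : ℝ) := by
    have : 4 * m ≤ n := by omega
    exact_mod_cast this
  have hm2 : (n : ℝ) ≤ 4 * (m : ℝ) + 3 := by
    have : n ≤ 4 * m + 3 := by omega
    exact_mod_cast this
  have hkR : (k : ℝ) = (n : ℝ) - 2 * m - 2 * q - 5 := by
    have h : k + (1 + 2 * m + 2 * (q + 2)) = n := by omega
    have h2 := congrArg (fun x : ℕ => (x : ℝ)) h
    push_cast at h2
    linarith
  have hn81 : (81 : ℝ) ≤ (n : ℝ) := by exact_mod_cast h81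
  have hq8 : 8 * (q : ℝ) ≤ ε * n := by
    nlinarith [mul_nonneg (sub_nonneg.mpr h8A) hq0,
      mul_nonneg (mul_nonneg hε.le (sub_nonneg.mpr hAqR)) hq0,
      mul_nonneg hε.le (sub_nonneg.mpr hqqR)]
  have harith : (1 / 8 - ε) * (n : ℝ) ^ 2 ≤ ((m * k : ℕ) : ℝ) := by
    push_cast
    rw [hkR]
    nlinarith [mul_nonneg (sub_nonneg.mpr hm1) (sub_nonneg.mpr hm2),
      mul_nonneg (sub_nonneg.mpr hm1) hq0,
      mul_nonneg (sub_nonneg.mpr hq8) hn0,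
      mul_nonneg (sub_nonneg.mpr hq9R) hn0,
      hn81, hε.le, hm0, hq0, hn0]
  calc (2 : ℝ) ^ ((1 / 8 - ε) * (n : ℝ) ^ 2)
      ≤ (2 : ℝ) ^ (((m * k : ℕ) : ℝ)) := Real.rpow_le_rpow_of_exponent_le one_le_two harith
    _ = ((2 ^ (m * k) : ℕ) : ℝ) := by rw [Real.rpow_natCast]; push_cast; ring
    _ ≤ (Nat.card {H : SimpleGraph (Fin n) // MaximalTriangleFree H} : ℝ) :=
        Nat.cast_le.mpr hcount
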